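/- (No duality gap.) For every integer T ≥ 1, the optimal values of the primal and dual LPs coincide: p^T = d^T. In particular, there exists a minimizing sequence (u_k, v_k, w_k) of dual-feasible triples whose objective values ∫_X (w_k + T·u_k) dλ_X converge to p^T. -/

import Mathlib

set_option maxHeartbeats 1000000
open MeasureTheory Filter Metric Bornology Set
open scoped ENNReal Topology NNReal


/-- Feasibility for the primal LP. -/
def PrimalFeasible (n : ℕ) (f : (Fin n → ℝ) → (Fin n → ℝ))
    (X0 X : Set (Fin n → ℝ)) (T : ℕ)
    (μ₀ μ μh ν : Measure (Fin n → ℝ)) (a : ℝ≥0∞) : Prop :=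
  IsFiniteMeasure μ₀ ∧ IsFiniteMeasure μ ∧ IsFiniteMeasure μh ∧ IsFiniteMeasure ν ∧
  μ₀ X0ᶜ = 0 ∧ μ Xᶜ = 0 ∧ μh Xᶜ = 0 ∧ ν Xᶜ = 0 ∧
  ν Set.univ + a = (T : ℝ≥0∞) * volume X ∧
  μ + ν = Measure.map f ν + μ₀ ∧
  μ + μh = volume.restrict X

/-- Optimal value of the primal LP (as a real number). -/
noncomputable def primalValue (n : ℕ) (f : (Fin n → ℝ) → (Fin n → ℝ))
    (X0 X : Set (Fin n → ℝ)) (T : ℕ) : ℝ :=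
  sSup {r : ℝ | ∃ μ₀ μ μh ν a, PrimalFeasible n f X0 X T μ₀ μ μh ν a ∧
    r = (μ Set.univ).toReal}

/-- Feasibility for the dual LP. -/
def DualFeasible (n : ℕ) (f : (Fin n → ℝ) → (Fin n → ℝ))
    (X0 X : Set (Fin n → ℝ)) (u : ℝ) (v w : (Fin n → ℝ) → ℝ) : Prop :=
  0 ≤ u ∧ Continuous v ∧ Continuous w ∧
  (∀ x ∈ X0, 0 ≤ v x) ∧
  (∀ x ∈ X, 1 + v x ≤ w x) ∧
  (∀ x ∈ X, 0 ≤ w x) ∧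
  (∀ x ∈ X, v x ≤ u + v (f x))

/-- Optimal value of the dual LP. -/
noncomputable def dualValue (n : ℕ) (f : (Fin n → ℝ) → (Fin n → ℝ))
    (X0 X : Set (Fin n → ℝ)) (T : ℕ) : ℝ :=
  sInf {r : ℝ | ∃ u v w, DualFeasible n f X0 X u v w ∧
    r = ∫ x in X, (w x + (T : ℝ) * u)}


namespace NoGap

variable {n : ℕ} (f : (Fin n → ℝ) → (Fin n → ℝ)) (X0 X : Set (Fin n → ℝ))

/-- Reachable set at time exactly `t`. -/
def F (t : ℕ) : Set (Fin n → ℝ) := f^[t] '' X0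

/-- Points first reached at time `t`. -/
def A (t : ℕ) : Set (Fin n → ℝ) := F f X0 t \ ⋃ (s : ℕ) (_ : s < t), F f X0 s

lemma contDiff_of_poly
    (hfpoly : ∀ i, ∃ p : MvPolynomial (Fin n) ℝ, ∀ x, f x i = MvPolynomial.eval x p) :
    ContDiff ℝ 1 f := by
  rw [contDiff_pi]
  intro i
  obtain ⟨p, hp⟩ := hfpoly i
  have : (fun x => f x i) = fun x => MvPolynomial.eval x p := funext hp
  rw [this]
  exact (AnalyticOnNhd.eval_mvPolynomial p).contDiff

section Basic

variable (hX0 : IsCompact X0) (hX : IsCompact X)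
  (hreach : (⋃ t : ℕ, f^[t] '' X0) ⊆ X) (hfc : Continuous f)

lemma F_compact (hX0 : IsCompact X0) (hfc : Continuous f) (t : ℕ) : IsCompact (F f X0 t) :=
  hX0.image (hfc.iterate t)

lemma F_subset_X (hreach : (⋃ t : ℕ, f^[t] '' X0) ⊆ X) (t : ℕ) : F f X0 t ⊆ X :=
  fun x hx => hreach (Set.mem_iUnion.2 ⟨t, hx⟩)

lemma F_zero : F f X0 0 = X0 := by simp [F]

lemma F_succ (t : ℕ) : F f X0 (t + 1) = f '' F f X0 t := by
  rw [F, F, Function.iterate_succ']; exact Set.image_comp f _ X0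

lemma F_nonempty (h : X0.Nonempty) (t : ℕ) : (F f X0 t).Nonempty := h.image _

lemma A_subset_F (t : ℕ) : A f X0 t ⊆ F f X0 t := Set.diff_subset

lemma measurableSet_F (hX0 : IsCompact X0) (hfc : Continuous f) (t : ℕ) :
    MeasurableSet (F f X0 t) := (F_compact f X0 hX0 hfc t).isClosed.measurableSet

lemma measurableSet_A (hX0 : IsCompact X0) (hfc : Continuous f) (t : ℕ) :
    MeasurableSet (A f X0 t) :=
  (measurableSet_F f X0 hX0 hfc t).diff
    (MeasurableSet.biUnion (Set.to_countable _) fun s _ => measurableSet_F f X0 hX0 hfc s)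

lemma A_disjoint {s t : ℕ} (hst : s ≠ t) : Disjoint (A f X0 s) (A f X0 t) := by
  wlog h : s < t generalizing s t
  · exact (this hst.symm (by omega)).symm
  refine Set.disjoint_left.2 fun x hxs hxt => ?_
  exact hxt.2 (Set.mem_iUnion.2 ⟨s, Set.mem_iUnion.2 ⟨h, hxs.1⟩⟩)

lemma mem_A_of_min {x : Fin n → ℝ} {t : ℕ} (hx : x ∈ F f X0 t)
    (hmin : ∀ s < t, x ∉ F f X0 s) : x ∈ A f X0 t := by
  refine ⟨hx, fun hmem => ?_⟩
  obtain ⟨s, hs⟩ := Set.mem_iUnion.1 hmem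
  obtain ⟨hst, hxs⟩ := Set.mem_iUnion.1 hs
  exact hmin s hst hxs

end Basic

section WeakDuality

variable {E : Type*} [MeasurableSpace E] [TopologicalSpace E] [OpensMeasurableSpace E]
  [T2Space E]

lemma integrable_of_compact_support {m : Measure E} [IsFiniteMeasure m] {S : Set E}
    (hS : IsCompact S) (hm : m Sᶜ = 0) {φ : E → ℝ} (hφ : Continuous φ) :
    Integrable φ m := by
  rcases S.eq_empty_or_nonempty with rfl | hne
  · simp only [Set.compl_empty] at hm
    have : m = 0 := by
      ext s hs
      exact le_antisymm (le_trans (measure_mono (Set.subset_univ s)) hm.le) zero_le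
    simp [this]
  obtain ⟨M, hM⟩ := (hS.image hφ.norm).bddAbove
  have hae : ∀ᵐ x ∂m, x ∈ S := by
    rw [MeasureTheory.ae_iff]
    exact hm
  refine Integrable.mono' (integrable_const M) hφ.aestronglyMeasurable ?_
  filter_upwards [hae] with x hx
  exact hM (Set.mem_image_of_mem _ hx)


end WeakDuality

section WD2

variable {n : ℕ} {f : (Fin n → ℝ) → (Fin n → ℝ)} {X0 X : Set (Fin n → ℝ)} {T : ℕ}

lemma weak_duality (hX0 : IsCompact X0) (hX : IsCompact X) (hfc : Continuous f)
    {μ₀ μ μh ν : Measure (Fin n → ℝ)} {a : ℝ≥0∞} {u : ℝ} {v w : (Fin n → ℝ) → ℝ}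
    (hP : PrimalFeasible n f X0 X T μ₀ μ μh ν a) (hD : DualFeasible n f X0 X u v w) :
    (μ Set.univ).toReal ≤ ∫ x in X, (w x + (T : ℝ) * u) := by
  obtain ⟨hμ₀f, hμf, hμhf, hνf, hμ₀s, hμs, hμhs, hνs, hbud, hbal, hsplit⟩ := hP
  obtain ⟨hu, hv, hw, hv0, hwv, hw0, hvu⟩ := hD
  have hXm : MeasurableSet X := hX.isClosed.measurableSet
  have hXfin : volume X < ∞ := hX.measure_lt_top
  haveI : IsFiniteMeasure (volume.restrict X : Measure (Fin n → ℝ)) :=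
    ⟨by rw [Measure.restrict_apply_univ]; exact hXfin⟩
  have hfm : Measurable f := hfc.measurable
  -- ae-membership facts
  have aeX : ∀ {m : Measure (Fin n → ℝ)}, m Xᶜ = 0 → ∀ᵐ x ∂m, x ∈ X := by
    intro m hm
    rw [MeasureTheory.ae_iff]; exact hm
  have aeX0 : ∀ᵐ x ∂μ₀, x ∈ X0 := by rw [MeasureTheory.ae_iff]; exact hμ₀s
  -- integrability
  haveI : IsFiniteMeasure (Measure.map f ν) := by
    constructor
    rw [Measure.map_apply hfm MeasurableSet.univ]
    simpa using measure_lt_top ν _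
  have hmapfs : (Measure.map f ν) (f '' X)ᶜ = 0 := by
    rw [Measure.map_apply hfm (hX.image hfc).isClosed.measurableSet.compl]
    refine measure_mono_null ?_ hνs
    intro x hx
    simp only [Set.mem_preimage, Set.mem_compl_iff] at hx ⊢
    exact fun hxX => hx (Set.mem_image_of_mem f hxX)
  have hwres : Integrable w (volume.restrict X) :=
    integrable_of_compact_support hX (by rw [Measure.restrict_apply (MeasurableSet.compl hXm)]; simp) hw
  have hwμ : Integrable w μ := integrable_of_compact_support hX hμs hw
  have hwμh : Integrable w μh := integrable_of_compact_support hX hμhs hw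
  have hvμ : Integrable v μ := integrable_of_compact_support hX hμs hv
  have hvν : Integrable v ν := integrable_of_compact_support hX hνs hv
  have hvμ₀ : Integrable v μ₀ := integrable_of_compact_support hX0 hμ₀s hv
  have hvmap : Integrable v (Measure.map f ν) :=
    integrable_of_compact_support (hX.image hfc) hmapfs hv
  have hvfν : Integrable (fun x => v (f x)) ν :=
    integrable_of_compact_support hX hνs (hv.comp hfc)
  -- step 1 : ∫ w dλ_X = ∫ w dμ + ∫ w dμh
  have S1 : ∫ x in X, w x = ∫ x, w x ∂μ + ∫ x, w x ∂μh := by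
    rw [← integral_add_measure hwμ hwμh, hsplit]
  -- step 2
  have S2 : 0 ≤ ∫ x, w x ∂μh := by
    refine integral_nonneg_of_ae ?_
    filter_upwards [aeX hμhs] with x hx using hw0 x hx
  have S3 : (μ Set.univ).toReal + ∫ x, v x ∂μ ≤ ∫ x, w x ∂μ := by
    have : ∫ x, (1 + v x) ∂μ ≤ ∫ x, w x ∂μ := by
      refine integral_mono_ae ((integrable_const 1).add hvμ) hwμ ?_
      filter_upwards [aeX hμs] with x hx using hwv x hx
    rw [integral_add (integrable_const 1) hvμ] at this
    simpa [Measure.real] using this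
  have S4 : ∫ x, v x ∂μ + ∫ x, v x ∂ν = ∫ x, v (f x) ∂ν + ∫ x, v x ∂μ₀ := by
    rw [← integral_add_measure hvμ hvν, hbal, integral_add_measure hvmap hvμ₀,
      integral_map hfm.aemeasurable hv.aestronglyMeasurable]
  have S5 : 0 ≤ ∫ x, v x ∂μ₀ := by
    refine integral_nonneg_of_ae ?_
    filter_upwards [aeX0] with x hx using hv0 x hx
  have S6 : ∫ x, v x ∂ν - u * (ν Set.univ).toReal ≤ ∫ x, v (f x) ∂ν := by
    have : ∫ x, (v x - u) ∂ν ≤ ∫ x, v (f x) ∂ν := by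
      refine integral_mono_ae (hvν.sub (integrable_const u)) hvfν ?_
      filter_upwards [aeX hνs] with x hx
      linarith [hvu x hx]
    rw [integral_sub hvν (integrable_const u)] at this
    simpa [mul_comm, Measure.real] using this
  have S7 : (ν Set.univ).toReal ≤ (T : ℝ) * (volume X).toReal := by
    have h1 : ν Set.univ ≤ (T : ℝ≥0∞) * volume X := by
      rw [← hbud]; exact self_le_add_right _ _
    have h2 : ((T : ℝ≥0∞) * volume X).toReal = (T : ℝ) * (volume X).toReal := by
      rw [ENNReal.toReal_mul]; simp
    rw [← h2]
    exact ENNReal.toReal_mono (ENNReal.mul_ne_top (ENNReal.natCast_ne_top T) hXfin.ne) h1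
  have S8 : u * (ν Set.univ).toReal ≤ u * ((T : ℝ) * (volume X).toReal) :=
    mul_le_mul_of_nonneg_left S7 hu
  have SR : ∫ x in X, (w x + (T : ℝ) * u) =
      (∫ x in X, w x) + (volume X).toReal * ((T : ℝ) * u) := by
    rw [integral_add hwres (integrable_const _), integral_const, measureReal_def, Measure.restrict_apply_univ]
    simp [smul_eq_mul]
  rw [SR]
  nlinarith [S1, S2, S3, S4, S5, S6, S7, S8]

end WD2

section Helpers

variable {α β : Type*} [MeasurableSpace α] [MeasurableSpace β]

lemma map_finset_sum {ι : Type*} (I : Finset ι) (μ : ι → Measure α) {φ : α → β}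
    (hφ : Measurable φ) :
    Measure.map φ (∑ i ∈ I, μ i) = ∑ i ∈ I, Measure.map φ (μ i) := by
  ext s hs
  rw [Measure.map_apply hφ hs, Measure.finset_sum_apply, Measure.finset_sum_apply]
  exact Finset.sum_congr rfl fun i _ => (Measure.map_apply hφ hs).symm

lemma isFiniteMeasure_finset_sum {ι : Type*} (I : Finset ι) (μ : ι → Measure α)
    (h : ∀ i ∈ I, (μ i) Set.univ < ∞) : IsFiniteMeasure (∑ i ∈ I, μ i) := by
  constructor
  rw [Measure.finset_sum_apply]
  exact ENNReal.sum_lt_top.2 h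

lemma map_withDensity_comp {φ : α → β} (hφ : Measurable φ) (μ : Measure α) [SFinite μ]
    (ρ : β → ℝ≥0∞) (hρ : Measurable ρ) :
    Measure.map φ (μ.withDensity (ρ ∘ φ)) = (Measure.map φ μ).withDensity ρ := by
  ext S hS
  rw [Measure.map_apply hφ hS, withDensity_apply _ hS, withDensity_apply _ (hφ hS),
    setLIntegral_map hS hρ hφ]
  rfl

end Helpers
section Primal

variable {n : ℕ} {f : (Fin n → ℝ) → (Fin n → ℝ)} {X0 X : Set (Fin n → ℝ)} {T : ℕ}

lemma image_null (hf1 : ContDiff ℝ 1 f) (t : ℕ) {E : Set (Fin n → ℝ)}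
    (hE : MeasurableSet E) (h0 : volume E = 0) : volume (f^[t] '' E) = 0 := by
  have hit : ContDiff ℝ 1 (f^[t]) := by
    induction t with
    | zero => simpa using contDiff_id
    | succ k ih => rw [Function.iterate_succ']; exact hf1.comp ih
  have := MeasureTheory.addHaar_image_le_lintegral_abs_det_fderiv volume hE
    (f' := fun x => fderiv ℝ (f^[t]) x)
    (fun x _ => ((hit.differentiable one_ne_zero x).hasFDerivAt).hasFDerivWithinAt)
  refine le_antisymm (le_trans this ?_) zero_le
  rw [setLIntegral_measure_zero _ _ h0]

lemma primal_lower_bound (hX0 : IsCompact X0) (hX : IsCompact X)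
    (hreach : (⋃ t : ℕ, f^[t] '' X0) ⊆ X) (hf1 : ContDiff ℝ 1 f)
    (N : ℕ) (g : ℕ → ℝ) (hg0 : ∀ t, 0 ≤ g t) (hg1 : ∀ t, g t ≤ 1)
    (hbud : ∑ t ∈ Finset.range (N+1), (t : ℝ) * g t * (volume (A f X0 t)).toReal
      ≤ (T : ℝ) * (volume X).toReal) :
    ∃ μ₀ μ μh ν a, PrimalFeasible n f X0 X T μ₀ μ μh ν a ∧
      (μ Set.univ).toReal = ∑ t ∈ Finset.range (N+1), g t * (volume (A f X0 t)).toReal := by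
  classical
  have hfc : Continuous f := hf1.continuous
  have hfm : Measurable f := hfc.measurable
  have hitm : ∀ t : ℕ, Measurable (f^[t]) := fun t => (hfc.iterate t).measurable
  have hXm : MeasurableSet X := hX.isClosed.measurableSet
  have hX0m : MeasurableSet X0 := hX0.isClosed.measurableSet
  have hXfin : volume X < ∞ := hX.measure_lt_top
  have hAm : ∀ t, MeasurableSet (A f X0 t) := measurableSet_A f X0 hX0 hfc
  have hAX : ∀ t, A f X0 t ⊆ X := fun t => (A_subset_F f X0 t).trans (F_subset_X f X0 X hreach t)
  have hAfin : ∀ t, volume (A f X0 t) < ∞ :=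
    fun t => lt_of_le_of_lt (measure_mono (hAX t)) hXfin
  -- the basic measures
  set β : Measure (Fin n → ℝ) := volume.restrict X0 with hβ
  haveI : IsFiniteMeasure β := ⟨by rw [hβ, Measure.restrict_apply_univ]; exact hX0.measure_lt_top⟩
  set m : ℕ → Measure (Fin n → ℝ) := fun t => Measure.map (f^[t]) β with hm
  haveI : ∀ t, IsFiniteMeasure (m t) := by
    intro t
    constructor
    rw [hm, Measure.map_apply (hitm t) MeasurableSet.univ]
    simpa using measure_lt_top β _
  set α : ℕ → Measure (Fin n → ℝ) := fun t => volume.restrict (A f X0 t) with hα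
  haveI : ∀ t, IsFiniteMeasure (α t) :=
    fun t => ⟨by rw [hα, Measure.restrict_apply_univ]; exact hAfin t⟩
  have hac : ∀ t, α t ≪ m t := by
    intro t
    refine Measure.AbsolutelyContinuous.mk fun S hS h0 => ?_
    rw [hm, Measure.map_apply (hitm t) hS, hβ,
      Measure.restrict_apply ((hitm t) hS)] at h0
    rw [hα, Measure.restrict_apply hS]
    refine measure_mono_null ?_
      (image_null hf1 t (((hitm t) hS).inter hX0m) h0)
    intro x ⟨hxS, hxA⟩
    obtain ⟨y, hy, hyx⟩ := (A_subset_F f X0 t) hxA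
    exact ⟨y, ⟨by simpa [hyx] using hxS, hy⟩, hyx⟩
  set ρ : ℕ → (Fin n → ℝ) → ℝ≥0∞ := fun t => (α t).rnDeriv (m t) with hρ
  have hρm : ∀ t, Measurable (ρ t) := fun t => Measure.measurable_rnDeriv _ _
  set σ' : ℕ → Measure (Fin n → ℝ) := fun t => β.withDensity (ρ t ∘ f^[t]) with hσ'
  have hmapσ' : ∀ t, Measure.map (f^[t]) (σ' t) = α t := by
    intro t
    rw [hσ', map_withDensity_comp (hitm t) β (ρ t) (hρm t)]
    exact Measure.withDensity_rnDeriv_eq _ _ (hac t)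
  set σ : ℕ → Measure (Fin n → ℝ) := fun t => ENNReal.ofReal (g t) • σ' t with hσ
  have hmapσ : ∀ t, Measure.map (f^[t]) (σ t) = ENNReal.ofReal (g t) • α t := by
    intro t
    rw [hσ]
    simp only [Measure.map_smul]
    rw [hmapσ' t]
  have hσ'univ : ∀ t, σ' t Set.univ = volume (A f X0 t) := by
    intro t
    have := congrArg (fun m => m Set.univ) (hmapσ' t)
    simp only [Measure.map_apply (hitm t) MeasurableSet.univ, Set.preimage_univ] at this
    rw [this, hα, Measure.restrict_apply_univ]
  have hσuniv : ∀ t, σ t Set.univ = ENNReal.ofReal (g t) * volume (A f X0 t) := by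
    intro t
    rw [hσ]
    simp only [Measure.smul_apply, smul_eq_mul]
    rw [hσ'univ t]
  have hσX0 : ∀ t, σ t X0ᶜ = 0 := by
    intro t
    rw [hσ]
    simp only [Measure.smul_apply, smul_eq_mul]
    have : σ' t X0ᶜ = 0 := by
      rw [hσ', withDensity_apply _ hX0m.compl, hβ, Measure.restrict_restrict hX0m.compl]
      simp
    rw [hσ', hβ] at this
    rw [hσ', hβ, this, mul_zero]
  -- the candidate measures
  set μ₀ : Measure (Fin n → ℝ) := ∑ t ∈ Finset.range (N+1), σ t with hμ₀
  set μ : Measure (Fin n → ℝ) :=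
    ∑ t ∈ Finset.range (N+1), ENNReal.ofReal (g t) • α t with hμdef
  set ν : Measure (Fin n → ℝ) :=
    ∑ t ∈ Finset.range (N+1), ∑ s ∈ Finset.range t, Measure.map (f^[s]) (σ t) with hν
  have hμeq : μ = ∑ t ∈ Finset.range (N+1), Measure.map (f^[t]) (σ t) := by
    rw [hμdef]
    exact Finset.sum_congr rfl fun t _ => (hmapσ t).symm
  set μh : Measure (Fin n → ℝ) := volume.restrict X - μ with hμh
  -- finiteness facts
  have hσfin : ∀ t, σ t Set.univ < ∞ := by
    intro t
    rw [hσuniv t]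
    exact ENNReal.mul_lt_top ENNReal.ofReal_lt_top (hAfin t)
  have hmapσu : ∀ (s t : ℕ), (Measure.map (f^[s]) (σ t)) Set.univ = σ t Set.univ := by
    intro s t
    rw [Measure.map_apply (hitm s) MeasurableSet.univ, Set.preimage_univ]
  haveI hμ₀fin : IsFiniteMeasure μ₀ :=
    isFiniteMeasure_finset_sum _ _ (fun t _ => hσfin t)
  haveI hμfin : IsFiniteMeasure μ := by
    rw [hμeq]
    exact isFiniteMeasure_finset_sum _ _ (fun t _ => by rw [hmapσu t t]; exact hσfin t)
  haveI hνfin : IsFiniteMeasure ν := by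
    refine isFiniteMeasure_finset_sum _ _ (fun t _ => ?_)
    rw [Measure.finset_sum_apply]
    exact ENNReal.sum_lt_top.2 fun s _ => by rw [hmapσu s t]; exact hσfin t
  haveI hresfin : IsFiniteMeasure (volume.restrict X : Measure (Fin n → ℝ)) :=
    ⟨by rw [Measure.restrict_apply_univ]; exact hXfin⟩
  -- supports
  have hμ₀X0 : μ₀ X0ᶜ = 0 := by
    rw [hμ₀, Measure.finset_sum_apply]
    exact Finset.sum_eq_zero fun t _ => hσX0 t
  have hμX : μ Xᶜ = 0 := by
    rw [hμdef, Measure.finset_sum_apply]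
    refine Finset.sum_eq_zero fun t _ => ?_
    have hempty : Xᶜ ∩ A f X0 t = ∅ := by
      rw [Set.eq_empty_iff_forall_notMem]
      rintro x ⟨hxc, hxA⟩
      exact hxc (hAX t hxA)
    simp only [Measure.smul_apply, smul_eq_mul, hα]
    rw [Measure.restrict_apply hXm.compl, hempty]
    simp
  have hpreX0 : ∀ s : ℕ, (f^[s]) ⁻¹' Xᶜ ⊆ X0ᶜ := by
    intro s x hx hxX0
    exact hx (F_subset_X f X0 X hreach s ⟨x, hxX0, rfl⟩)
  have hνX : ν Xᶜ = 0 := by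
    rw [hν, Measure.finset_sum_apply]
    refine Finset.sum_eq_zero fun t _ => ?_
    rw [Measure.finset_sum_apply]
    refine Finset.sum_eq_zero fun s _ => ?_
    rw [Measure.map_apply (hitm s) hXm.compl]
    exact measure_mono_null (hpreX0 s) (hσX0 t)
  -- balance equation
  have hbal : μ + ν = Measure.map f ν + μ₀ := by
    have hmapν : Measure.map f ν
        = ∑ t ∈ Finset.range (N+1), ∑ s ∈ Finset.range t, Measure.map (f^[s+1]) (σ t) := by
      rw [hν, map_finset_sum _ _ hfm]
      refine Finset.sum_congr rfl fun t _ => ?_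
      rw [map_finset_sum _ _ hfm]
      refine Finset.sum_congr rfl fun s _ => ?_
      rw [Measure.map_map hfm (hitm s), ← Function.iterate_succ']
    rw [hmapν, hμ₀, hμeq, hν, ← Finset.sum_add_distrib, ← Finset.sum_add_distrib]
    refine Finset.sum_congr rfl fun t _ => ?_
    have h0 : Measure.map (f^[0]) (σ t) = σ t := by
      simp [Measure.map_id]
    rw [add_comm]
    calc ∑ s ∈ Finset.range t, Measure.map (f^[s]) (σ t) + Measure.map (f^[t]) (σ t)
        = ∑ s ∈ Finset.range (t+1), Measure.map (f^[s]) (σ t) := by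
          rw [Finset.sum_range_succ]
      _ = ∑ s ∈ Finset.range t, Measure.map (f^[s+1]) (σ t) + Measure.map (f^[0]) (σ t) := by
          rw [Finset.sum_range_succ']
      _ = ∑ s ∈ Finset.range t, Measure.map (f^[s+1]) (σ t) + σ t := by rw [h0]
  -- budget
  have hνuniv : ν Set.univ = ∑ t ∈ Finset.range (N+1), (t : ℝ≥0∞) * σ t Set.univ := by
    rw [hν, Measure.finset_sum_apply]
    refine Finset.sum_congr rfl fun t _ => ?_
    rw [Measure.finset_sum_apply]
    rw [Finset.sum_congr rfl fun s hs => hmapσu s t, Finset.sum_const, Finset.card_range,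
      nsmul_eq_mul]
  have hbudE : ν Set.univ ≤ (T : ℝ≥0∞) * volume X := by
    have hTX : (T : ℝ≥0∞) * volume X = ENNReal.ofReal ((T : ℝ) * (volume X).toReal) := by
      rw [ENNReal.ofReal_mul (Nat.cast_nonneg T), ENNReal.ofReal_natCast,
        ENNReal.ofReal_toReal hXfin.ne]
    have hLHS : ν Set.univ
        = ENNReal.ofReal (∑ t ∈ Finset.range (N+1),
            (t : ℝ) * g t * (volume (A f X0 t)).toReal) := by
      rw [ENNReal.ofReal_sum_of_nonneg fun t _ =>
        mul_nonneg (mul_nonneg t.cast_nonneg (hg0 t)) ENNReal.toReal_nonneg, hνuniv]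
      refine Finset.sum_congr rfl fun t _ => ?_
      rw [hσuniv t, ENNReal.ofReal_mul (mul_nonneg t.cast_nonneg (hg0 t)), ENNReal.ofReal_mul t.cast_nonneg,
        ENNReal.ofReal_natCast, ENNReal.ofReal_toReal (hAfin t).ne, mul_assoc]
    rw [hLHS, hTX]
    exact ENNReal.ofReal_le_ofReal hbud
  -- μ ≤ restrict X
  have hμle : μ ≤ volume.restrict X := by
    rw [Measure.le_iff]
    intro S hS
    rw [hμdef, Measure.finset_sum_apply, Measure.restrict_apply hS]
    calc ∑ t ∈ Finset.range (N+1), (ENNReal.ofReal (g t) • α t) S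
        ≤ ∑ t ∈ Finset.range (N+1), α t S := by
          refine Finset.sum_le_sum fun t _ => ?_
          simp only [Measure.smul_apply, smul_eq_mul]
          exact mul_le_of_le_one_left zero_le (ENNReal.ofReal_le_one.2 (hg1 t))
      _ = ∑ t ∈ Finset.range (N+1), volume (S ∩ A f X0 t) := by
          refine Finset.sum_congr rfl fun t _ => ?_
          rw [hα, Measure.restrict_apply hS]
      _ = volume (⋃ t ∈ Finset.range (N+1), S ∩ A f X0 t) := by
          rw [measure_biUnion_finset ?_ fun t _ => hS.inter (hAm t)]
          intro t _ r _ htr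
          exact (A_disjoint f X0 htr).mono Set.inter_subset_right Set.inter_subset_right
      _ ≤ volume (S ∩ X) := by
          refine measure_mono ?_
          refine Set.iUnion₂_subset fun t _ => ?_
          exact Set.inter_subset_inter_right S (hAX t)
  have hsplit : μ + μh = volume.restrict X := by
    rw [hμh, add_comm]
    exact Measure.sub_add_cancel_of_le hμle
  haveI hμhfin : IsFiniteMeasure μh := by
    constructor
    have := Measure.le_iff'.1 (Measure.sub_le (μ := volume.restrict X) (ν := μ)) Set.univ
    rw [← hμh] at this
    exact lt_of_le_of_lt this (by rw [Measure.restrict_apply_univ]; exact hXfin)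
  have hμhX : μh Xᶜ = 0 := by
    have := Measure.le_iff'.1 (Measure.sub_le (μ := volume.restrict X) (ν := μ)) Xᶜ
    rw [← hμh] at this
    refine le_antisymm (le_trans this ?_) zero_le
    rw [Measure.restrict_apply hXm.compl]
    simp
  -- value
  have hval : (μ Set.univ).toReal
      = ∑ t ∈ Finset.range (N+1), g t * (volume (A f X0 t)).toReal := by
    rw [hμdef, Measure.finset_sum_apply,
      ENNReal.toReal_sum (fun t _ => ?_)]
    · refine Finset.sum_congr rfl fun t _ => ?_
      simp only [Measure.smul_apply, smul_eq_mul, hα, Measure.restrict_apply_univ]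
      rw [ENNReal.toReal_mul, ENNReal.toReal_ofReal (hg0 t)]
    · simp only [Measure.smul_apply, smul_eq_mul, hα, Measure.restrict_apply_univ]
      exact (ENNReal.mul_lt_top ENNReal.ofReal_lt_top (hAfin t)).ne
  refine ⟨μ₀, μ, μh, ν, (T : ℝ≥0∞) * volume X - ν Set.univ,
    ⟨hμ₀fin, hμfin, hμhfin, hνfin, hμ₀X0, hμX, hμhX, hνX,
      add_tsub_cancel_of_le hbudE, hbal, hsplit⟩, hval⟩

end Primal
section Dual

variable {n : ℕ} {f : (Fin n → ℝ) → (Fin n → ℝ)} {X0 X : Set (Fin n → ℝ)} {T : ℕ}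

lemma dualSet_bddBelow (hX : IsCompact X) :
    BddBelow {r : ℝ | ∃ u v w, DualFeasible n f X0 X u v w ∧
      r = ∫ x in X, (w x + (T : ℝ) * u)} := by
  refine ⟨0, fun r hr => ?_⟩
  obtain ⟨u, v, w, hD, rfl⟩ := hr
  refine setIntegral_nonneg hX.isClosed.measurableSet fun x hx => ?_
  exact add_nonneg (hD.2.2.2.2.2.1 x hx) (mul_nonneg (Nat.cast_nonneg T) hD.1)

lemma exists_lipschitz (hf : ContDiff ℝ 1 f) (hX : IsCompact X) :
    ∃ L : ℝ≥0, 1 ≤ L ∧ LipschitzOnWith L f (closure (convexHull ℝ X)) := by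
  set K := closure (convexHull ℝ X) with hK
  have hKc : IsCompact K := (isBounded_convexHull.2 hX.isBounded).isCompact_closure
  have hco : Continuous fun x => ‖fderiv ℝ f x‖ := (hf.continuous_fderiv one_ne_zero).norm
  obtain ⟨M, hM⟩ := (hKc.image hco).bddAbove
  refine ⟨⟨max M 1, by positivity⟩, ?_, ?_⟩
  · apply NNReal.coe_le_coe.1
    exact le_max_right M 1
  · apply (convex_convexHull ℝ X).closure.lipschitzOnWith_of_nnnorm_fderiv_le
      (fun x _ => hf.differentiable one_ne_zero x)
    intro x hx
    have := hM (Set.mem_image_of_mem _ hx)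
    apply NNReal.coe_le_coe.1
    exact le_trans this (le_max_left _ _)

lemma dual_upper_bound (hX0 : IsCompact X0) (hX : IsCompact X)
    (hreach : (⋃ t : ℕ, f^[t] '' X0) ⊆ X) (hf1 : ContDiff ℝ 1 f) (hX0ne : X0.Nonempty)
    {u : ℝ} (hu : 0 < u) {N : ℕ} (hN : 2 ≤ u * (N + 1)) :
    dualValue n f X0 X T ≤
      (∑ t ∈ Finset.range (N+1), max (1 - u * t) 0 * (volume (A f X0 t)).toReal)
        + (T : ℝ) * u * (volume X).toReal := by
  classical
  have hfc : Continuous f := hf1.continuous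
  have hXm : MeasurableSet X := hX.isClosed.measurableSet
  have hXfin : volume X < ∞ := hX.measure_lt_top
  haveI : IsFiniteMeasure (volume.restrict X : Measure (Fin n → ℝ)) :=
    ⟨by rw [Measure.restrict_apply_univ]; exact hXfin⟩
  have hAm : ∀ t, MeasurableSet (A f X0 t) := measurableSet_A f X0 hX0 hfc
  have hAX : ∀ t, A f X0 t ⊆ X := fun t =>
    (A_subset_F f X0 t).trans (F_subset_X f X0 X hreach t)
  obtain ⟨L, hL1, hLip⟩ := exists_lipschitz hf1 hX
  have hL1R : (1 : ℝ) ≤ (L : ℝ) := hL1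
  have hLpos : (0 : ℝ) < (L : ℝ) := lt_of_lt_of_le one_pos hL1R
  set K := closure (convexHull ℝ X) with hK
  have hXK : X ⊆ K := (subset_convexHull ℝ X).trans subset_closure
  have hrange : (Finset.range (N+1)).Nonempty := ⟨0, by simp⟩
  -- the dual functions
  set coef : ℕ → ℕ → ℝ := fun k t => ((k : ℝ) + 1) / (L : ℝ)^t with hcoef
  have hcoefpos : ∀ k t, 0 < coef k t := fun k t => by positivity
  set v : ℕ → (Fin n → ℝ) → ℝ := fun k x => max (-2)
    ((Finset.range (N+1)).sup' hrange (fun t => -u*t - coef k t * infDist x (F f X0 t)))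
    with hv
  set w : ℕ → (Fin n → ℝ) → ℝ := fun k x => max 0 (1 + v k x) with hw
  have hvc : ∀ k, Continuous (v k) := by
    intro k
    refine continuous_const.max ?_
    refine Continuous.finset_sup'_apply hrange fun t _ => ?_
    exact continuous_const.sub (continuous_const.mul (continuous_infDist_pt _))
  have hwc : ∀ k, Continuous (w k) := fun k => continuous_const.max
    (continuous_const.add (hvc k))
  have hvle0 : ∀ k x, v k x ≤ 0 := by
    intro k x
    refine max_le (by norm_num) ((Finset.sup'_le _ _) fun t _ => ?_)
    have h1 : 0 ≤ coef k t * infDist x (F f X0 t) :=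
      mul_nonneg (hcoefpos k t).le infDist_nonneg
    have h2 : (0:ℝ) ≤ u * t := mul_nonneg hu.le t.cast_nonneg
    linarith
  have hwle1 : ∀ k x, w k x ≤ 1 := fun k x =>
    max_le (by norm_num) (by linarith [hvle0 k x])
  have hw0 : ∀ k x, 0 ≤ w k x := fun k x => le_max_left _ _
  -- dual feasibility
  have hfeas : ∀ k, DualFeasible n f X0 X u (v k) (w k) := by
    intro k
    refine ⟨hu.le, hvc k, hwc k, ?_, ?_, fun x _ => hw0 k x, ?_⟩
    · -- v ≥ 0 on X0
      intro x hx
      have h0mem : 0 ∈ Finset.range (N+1) := by simp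
      have := Finset.le_sup' (fun t => -u*t - coef k t * infDist x (F f X0 t)) h0mem
      have hd0 : infDist x (F f X0 0) = 0 := by
        rw [F_zero]; exact infDist_zero_of_mem hx
      refine le_max_of_le_right (le_trans (le_of_eq ?_) this)
      rw [hd0]
      simp
    · intro x _; exact le_max_right _ _
    · -- v x ≤ u + v (f x)
      intro x hx
      refine max_le ?_ ?_
      · have : -2 ≤ v k (f x) := le_max_left _ _
        linarith
      · refine (Finset.sup'_le _ _) fun t ht => ?_
        rw [Finset.mem_range] at ht
        have hdnn : 0 ≤ infDist x (F f X0 t) := infDist_nonneg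
        by_cases htN : t + 1 ≤ N
        · -- use branch t+1 at f x
          have ht1 : t + 1 ∈ Finset.range (N+1) := Finset.mem_range.2 (by omega)
          have hsup := Finset.le_sup'
            (fun s => -u*s - coef k s * infDist (f x) (F f X0 s)) ht1
          have hvfx : -u*(((t+1 : ℕ)) : ℝ) - coef k (t+1) * infDist (f x) (F f X0 (t+1))
              ≤ v k (f x) := le_trans hsup (le_max_right _ _)
          push_cast at hvfx
          obtain ⟨aa, haF, hdist⟩ :=
            (F_compact f X0 hX0 hfc t).exists_infDist_eq_dist (F_nonempty f X0 hX0ne t) x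
          have hfaF : f aa ∈ F f X0 (t+1) := by
            rw [F_succ]; exact Set.mem_image_of_mem f haF
          have hflip : dist (f x) (f aa) ≤ (L : ℝ) * dist x aa :=
            hLip.dist_le_mul x (hXK hx) aa (hXK (F_subset_X f X0 X hreach t haF))
          have hinf1 : infDist (f x) (F f X0 (t+1)) ≤ (L : ℝ) * dist x aa :=
            le_trans (infDist_le_dist_of_mem hfaF) hflip
          have hcoefL : coef k (t+1) * (L : ℝ) = coef k t := by
            rw [hcoef]
            field_simp [pow_succ]
            ring
          have hkey : coef k (t+1) * infDist (f x) (F f X0 (t+1))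
              ≤ coef k t * infDist x (F f X0 t) := by
            calc coef k (t+1) * infDist (f x) (F f X0 (t+1))
                ≤ coef k (t+1) * ((L : ℝ) * dist x aa) :=
                  mul_le_mul_of_nonneg_left hinf1 (hcoefpos k (t+1)).le
              _ = coef k t * dist x aa := by rw [← mul_assoc, hcoefL]
              _ = coef k t * infDist x (F f X0 t) := by rw [hdist]
          linarith
        · -- t = N : use the cap
          have htN' : t = N := by omega
          have hvcap : -2 ≤ v k (f x) := le_max_left _ _
          have h1 : -u*t - coef k t * infDist x (F f X0 t) ≤ -u*t :=
            by nlinarith [mul_nonneg (hcoefpos k t).le hdnn]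
          have h2 : u * (t+1) = u * t + u := by ring
          subst htN'
          nlinarith
  -- the limit function
  set φ : (Fin n → ℝ) → ℝ := fun x => ∑ t ∈ Finset.range (N+1),
    Set.indicator (A f X0 t) (fun _ => max (1 - u*t) 0) x with hφ
  -- key eventual bound for non-reached points
  have hev : ∀ (x : Fin n → ℝ) (t : ℕ), x ∉ F f X0 t → ∀ c : ℝ,
      ∀ᶠ k in atTop, -u*t - coef k t * infDist x (F f X0 t) ≤ c := by
    intro x t hxt c
    have hd : 0 < infDist x (F f X0 t) :=
      ((F_compact f X0 hX0 hfc t).isClosed.notMem_iff_infDist_pos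
        (F_nonempty f X0 hX0ne t)).1 hxt
    have hconst : 0 < infDist x (F f X0 t) / (L:ℝ)^t := by positivity
    have htend : Tendsto (fun k : ℕ => coef k t * infDist x (F f X0 t)) atTop atTop := by
      have heq : (fun k : ℕ => coef k t * infDist x (F f X0 t))
          = fun k : ℕ => ((k:ℝ)+1) * (infDist x (F f X0 t) / (L:ℝ)^t) := by
        funext k
        rw [hcoef]
        simp only []
        rw [div_mul_eq_mul_div, mul_div_assoc]
      rw [heq]
      exact (tendsto_natCast_atTop_atTop.atTop_add tendsto_const_nhds).atTop_mul_const hconst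
    filter_upwards [htend.eventually_ge_atTop (-u*t - c)] with k hk
    linarith
  -- pointwise convergence
  have hpt : ∀ x, Tendsto (fun k => w k x) atTop (𝓝 (φ x)) := by
    intro x
    by_cases hS : ∃ t, x ∈ F f X0 t
    · set t₀ := Nat.find hS with ht₀
      have hxt₀ : x ∈ F f X0 t₀ := Nat.find_spec hS
      have hmin : ∀ s, s < t₀ → x ∉ F f X0 s := fun s hs => Nat.find_min hS hs
      have hxA : x ∈ A f X0 t₀ := mem_A_of_min f X0 hxt₀ hmin
      have hd₀ : infDist x (F f X0 t₀) = 0 := infDist_zero_of_mem hxt₀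
      set val : ℝ := max 0 (1 - u * t₀) with hval
      have hφx : φ x = val := by
        simp only [hφ]
        by_cases ht₀N : t₀ ≤ N
        · rw [Finset.sum_eq_single t₀]
          · rw [Set.indicator_of_mem hxA]
            exact max_comm _ _
          · intro t _ hne
            rw [Set.indicator_of_notMem]
            exact fun hxt => (Set.disjoint_left.1 (A_disjoint f X0 hne)) hxt hxA
          · intro h
            exact absurd (Finset.mem_range.2 (by omega)) h
        · have hz : ∀ t ∈ Finset.range (N+1),
              Set.indicator (A f X0 t) (fun _ => max (1 - u*(t:ℝ)) 0) x = 0 := by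
            intro t ht
            rw [Finset.mem_range] at ht
            rw [Set.indicator_of_notMem]
            intro hxt
            exact hmin t (by omega) (A_subset_F f X0 t hxt)
          rw [Finset.sum_eq_zero hz, hval]
          have hcast : (N:ℝ)+1 ≤ (t₀:ℝ) := by
            have : N+1 ≤ t₀ := by omega
            exact_mod_cast this
          have : u * ((N:ℝ)+1) ≤ u * t₀ := mul_le_mul_of_nonneg_left hcast hu.le
          rw [eq_comm, max_eq_left_iff]
          linarith
      -- lower bound for all k
      have hlow : ∀ k, val ≤ w k x := by
        intro k
        by_cases ht₀N : t₀ ≤ N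
        · have ht₀mem : t₀ ∈ Finset.range (N+1) := Finset.mem_range.2 (by omega)
          have hterm := Finset.le_sup'
            (fun t => -u*t - coef k t * infDist x (F f X0 t)) ht₀mem
          rw [hd₀, mul_zero, sub_zero] at hterm
          have hv0 : -u*t₀ ≤ v k x := le_trans hterm (le_max_right _ _)
          refine max_le (hw0 k x) ?_
          have : 1 - u*t₀ ≤ 1 + v k x := by linarith
          exact le_trans this (le_max_right _ _)
        · have : u * ((N:ℝ)+1) ≤ u * t₀ := by
            refine mul_le_mul_of_nonneg_left ?_ hu.le
            have : N+1 ≤ t₀ := by omega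
            exact_mod_cast this
          have hval0 : val = 0 := by
            rw [hval, max_eq_left_iff]
            linarith
          rw [hval0]
          exact hw0 k x
      -- eventual upper bound
      have hup : ∀ᶠ k in atTop, w k x ≤ val := by
        have hall : ∀ᶠ k in atTop, ∀ t ∈ Finset.range (N+1),
            x ∉ F f X0 t → -u*t - coef k t * infDist x (F f X0 t) ≤ -1 := by
          rw [Filter.eventually_all_finset]
          intro t _
          by_cases hxt : x ∈ F f X0 t
          · exact Filter.Eventually.of_forall fun k hc => absurd hxt hc
          · filter_upwards [hev x t hxt (-1)] with k hk _
            exact hk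
        filter_upwards [hall] with k hk
        have hsup : v k x ≤ max (-1) (-(u*t₀)) := by
          refine max_le (by norm_num) ((Finset.sup'_le _ _) fun t ht => ?_)
          by_cases hxt : x ∈ F f X0 t
          · have htt₀ : t₀ ≤ t := by
              by_contra hc
              exact hmin t (by omega) hxt
            have h1 : u * t₀ ≤ u * t := by
              refine mul_le_mul_of_nonneg_left ?_ hu.le
              exact_mod_cast htt₀
            have h2 : 0 ≤ coef k t * infDist x (F f X0 t) :=
              mul_nonneg (hcoefpos k t).le infDist_nonneg
            refine le_trans ?_ (le_max_right _ _)
            linarith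
          · exact le_trans (hk t ht hxt) (le_max_left _ _)
        simp only [hw, hval]
        rcases max_cases (-1 : ℝ) (-(u*t₀)) with ⟨heq, _⟩ | ⟨heq, _⟩ <;> rw [heq] at hsup
        · have : 1 + v k x ≤ 0 := by linarith
          refine max_le (le_max_left _ _) (le_trans this (le_max_left _ _))
        · have : 1 + v k x ≤ 1 - u*t₀ := by linarith
          refine max_le (le_max_left _ _) (le_trans this (le_max_right _ _))
      rw [hφx]
      have heq : ∀ᶠ k in atTop, w k x = val := by
        filter_upwards [hup] with k hk
        exact le_antisymm hk (hlow k)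
      exact Tendsto.congr' (Filter.EventuallyEq.symm heq) tendsto_const_nhds
    · push_neg at hS
      have hφx : φ x = 0 := by
        simp only [hφ]
        refine Finset.sum_eq_zero fun t _ => ?_
        rw [Set.indicator_of_notMem]
        exact fun hxt => hS t (A_subset_F f X0 t hxt)
      have heq : ∀ᶠ k in atTop, w k x = 0 := by
        have hall : ∀ᶠ k in atTop, ∀ t ∈ Finset.range (N+1),
            -u*t - coef k t * infDist x (F f X0 t) ≤ -2 := by
          rw [Filter.eventually_all_finset]
          intro t _
          exact hev x t (hS t) (-2)
        filter_upwards [hall] with k hk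
        have hsup : v k x = -2 := by
          simp only [hv]
          exact max_eq_left ((Finset.sup'_le _ _) hk)
        simp only [hw]
        rw [hsup]
        norm_num
      rw [hφx]
      exact Tendsto.congr' (Filter.EventuallyEq.symm heq) tendsto_const_nhds
  -- integrability
  have hres0 : (volume.restrict X : Measure (Fin n → ℝ)) Xᶜ = 0 := by
    rw [Measure.restrict_apply hXm.compl]
    simp
  have hiw : ∀ k, Integrable (w k) (volume.restrict X) :=
    fun k => integrable_of_compact_support hX hres0 (hwc k)
  have hφm : AEStronglyMeasurable φ (volume.restrict X) := by
    refine Measurable.aestronglyMeasurable ?_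
    simp only [hφ]
    exact Finset.measurable_sum _ fun t _ => measurable_const.indicator (hAm t)
  -- dominated convergence
  have hDCT : Tendsto (fun k => ∫ x in X, w k x) atTop (𝓝 (∫ x in X, φ x)) := by
    refine tendsto_integral_of_dominated_convergence (fun _ => (1:ℝ))
      (fun k => (hwc k).aestronglyMeasurable) (integrable_const 1) ?_ ?_
    · intro k
      refine Filter.Eventually.of_forall fun x => ?_
      rw [Real.norm_eq_abs, abs_le]
      refine ⟨?_, ?_⟩ <;> linarith [hw0 k x, hwle1 k x]
    · exact Filter.Eventually.of_forall hpt
  -- value of the limit integral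
  have hφint : ∫ x in X, φ x
      = ∑ t ∈ Finset.range (N+1), max (1 - u * t) 0 * (volume (A f X0 t)).toReal := by
    simp only [hφ]
    rw [integral_finset_sum _ fun t _ => (integrable_const _).indicator (hAm t)]
    refine Finset.sum_congr rfl fun t _ => ?_
    rw [integral_indicator_const _ (hAm t), measureReal_def, Measure.restrict_apply (hAm t),
      Set.inter_eq_self_of_subset_left (hAX t), smul_eq_mul, mul_comm]
  -- conclude
  have hmem : ∀ k, dualValue n f X0 X T ≤ ∫ x in X, (w k x + (T : ℝ) * u) := by
    intro k
    exact csInf_le (dualSet_bddBelow hX) ⟨u, v k, w k, hfeas k, rfl⟩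
  have hvalk : ∀ k, ∫ x in X, (w k x + (T : ℝ) * u)
      = (∫ x in X, w k x) + (volume X).toReal * ((T : ℝ) * u) := by
    intro k
    rw [integral_add (hiw k) (integrable_const _), integral_const,
      measureReal_def, Measure.restrict_apply_univ, smul_eq_mul]
  have hfinal : Tendsto (fun k => ∫ x in X, (w k x + (T : ℝ) * u)) atTop
      (𝓝 ((∫ x in X, φ x) + (volume X).toReal * ((T : ℝ) * u))) := by
    simp only [hvalk]
    exact hDCT.add_const _
  have := ge_of_tendsto' hfinal hmem
  rw [hφint] at this
  calc dualValue n f X0 X T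
      ≤ (∑ t ∈ Finset.range (N+1), max (1 - u * t) 0 * (volume (A f X0 t)).toReal)
        + (volume X).toReal * ((T : ℝ) * u) := this
    _ = _ := by ring

end Dual
section Assemble

variable {n : ℕ} {f : (Fin n → ℝ) → (Fin n → ℝ)} {X0 X : Set (Fin n → ℝ)} {T : ℕ}

lemma primal_zero_mem (hX : IsCompact X) :
    (0:ℝ) ∈ {r : ℝ | ∃ μ₀ μ μh ν a, PrimalFeasible n f X0 X T μ₀ μ μh ν a ∧
      r = (μ Set.univ).toReal} := by
  haveI : IsFiniteMeasure (volume.restrict X : Measure (Fin n → ℝ)) :=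
    ⟨by rw [Measure.restrict_apply_univ]; exact hX.measure_lt_top⟩
  refine ⟨0, 0, volume.restrict X, 0, (T : ℝ≥0∞) * volume X,
    ⟨inferInstance, inferInstance, inferInstance, inferInstance, ?_, ?_, ?_, ?_, ?_, ?_, ?_⟩, ?_⟩
  · simp
  · simp
  · rw [Measure.restrict_apply (hX.isClosed.measurableSet.compl)]
    simp
  · simp
  · simp
  · simp [Measure.map_zero]
  · simp
  · simp

lemma primal_bddAbove (hX : IsCompact X) :
    ∀ r ∈ {r : ℝ | ∃ μ₀ μ μh ν a, PrimalFeasible n f X0 X T μ₀ μ μh ν a ∧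
      r = (μ Set.univ).toReal}, r ≤ (volume X).toReal := by
  rintro r ⟨μ₀, μ, μh, ν, a, hP, rfl⟩
  have hμle : μ Set.univ ≤ volume X := by
    have := congrArg (fun m : Measure (Fin n → ℝ) => m Set.univ) hP.2.2.2.2.2.2.2.2.2.2
    simp only [Measure.add_apply, Measure.restrict_apply_univ] at this
    exact le_trans (self_le_add_right _ _) this.le
  exact ENNReal.toReal_mono hX.measure_lt_top.ne hμle

lemma p_le_d (hX0 : IsCompact X0) (hX : IsCompact X) (hfc : Continuous f) :
    primalValue n f X0 X T ≤ dualValue n f X0 X T := by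
  have hSne : Set.Nonempty {r : ℝ | ∃ μ₀ μ μh ν a, PrimalFeasible n f X0 X T μ₀ μ μh ν a ∧
      r = (μ Set.univ).toReal} := ⟨0, primal_zero_mem hX⟩
  have hDne : Set.Nonempty {r : ℝ | ∃ u v w, DualFeasible n f X0 X u v w ∧
      r = ∫ x in X, (w x + (T : ℝ) * u)} := by
    refine ⟨∫ x in X, ((1:ℝ) + (T : ℝ) * 0), 0, fun _ => 0, fun _ => 1, ?_, rfl⟩
    exact ⟨le_refl 0, continuous_const, continuous_const, fun x _ => le_refl 0,
      fun x _ => by norm_num, fun x _ => one_pos.le, fun x _ => by norm_num⟩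
  refine le_csInf hDne ?_
  rintro r ⟨u, v, w, hD, rfl⟩
  refine csSup_le hSne ?_
  rintro s ⟨μ₀, μ, μh, ν, a, hP, rfl⟩
  exact weak_duality hX0 hX hfc hP hD

lemma d_le_p (hX0 : IsCompact X0) (hX : IsCompact X)
    (hreach : (⋃ t : ℕ, f^[t] '' X0) ⊆ X) (hf1 : ContDiff ℝ 1 f) (hT : 1 ≤ T) :
    dualValue n f X0 X T ≤ primalValue n f X0 X T := by
  classical
  have hfc : Continuous f := hf1.continuous
  rcases X0.eq_empty_or_nonempty with hX0e | hX0ne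
  · -- empty initial set : dual value ≤ 0 ≤ primal value
    have h1 : dualValue n f X0 X T ≤ 0 := by
      have hmem : (0:ℝ) ∈ {r : ℝ | ∃ u v w, DualFeasible n f X0 X u v w ∧
          r = ∫ x in X, (w x + (T : ℝ) * u)} := by
        refine ⟨0, fun _ => -1, fun _ => 0, ?_, ?_⟩
        · refine ⟨le_refl 0, continuous_const, continuous_const, ?_, ?_, ?_, ?_⟩
          · intro x hx
            rw [hX0e] at hx
            exact absurd hx (Set.notMem_empty x)
          · intro x _; norm_num
          · intro x _; exact le_refl 0
          · intro x _; norm_num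
        · simp
      exact csInf_le (dualSet_bddBelow hX) hmem
    have h2 : (0:ℝ) ≤ primalValue n f X0 X T :=
      le_csSup ⟨(volume X).toReal, fun r hr => primal_bddAbove hX r hr⟩ (primal_zero_mem hX)
    linarith
  · -- main case
    set c : ℕ → ℝ := fun t => (volume (A f X0 t)).toReal with hc
    have hc0 : ∀ t, 0 ≤ c t := fun t => ENNReal.toReal_nonneg
    set B : ℝ := (T : ℝ) * (volume X).toReal with hB
    have hB0 : 0 ≤ B := by positivity
    set W : ℕ → ℝ := fun m => ∑ t ∈ Finset.range m, t * c t with hW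
    have hWmono : ∀ m, W m ≤ W (m+1) := by
      intro m
      simp only [hW, Finset.sum_range_succ]
      nlinarith [hc0 m, Nat.cast_nonneg (α := ℝ) m]
    have hprim : ∀ (N : ℕ) (g : ℕ → ℝ), (∀ t, 0 ≤ g t) → (∀ t, g t ≤ 1) →
        (∑ t ∈ Finset.range (N+1), (t:ℝ) * g t * c t ≤ B) →
        ∑ t ∈ Finset.range (N+1), g t * c t ≤ primalValue n f X0 X T := by
      intro N g hg0 hg1 hbud
      obtain ⟨μ₀, μ, μh, ν, a, hP, hval⟩ :=
        primal_lower_bound hX0 hX hreach hf1 N g hg0 hg1 hbud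
      refine le_trans (le_of_eq hval.symm) ?_
      exact le_csSup ⟨(volume X).toReal, fun r hr => primal_bddAbove hX r hr⟩
        ⟨μ₀, μ, μh, ν, a, hP, rfl⟩
    by_cases hcase : ∀ m, W m ≤ B
    · -- budget never binds
      refine le_of_forall_pos_le_add ?_
      intro ε hε
      set u : ℝ := ε / (B + 1) with hu
      have hupos : 0 < u := by positivity
      set N : ℕ := Nat.ceil (2/u) with hNdef
      have hN : 2 ≤ u * (N + 1) := by
        have h1 : (2/u : ℝ) ≤ N := Nat.le_ceil _
        have h2 : (2/u : ℝ) ≤ (N:ℝ) + 1 := by linarith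
        calc (2:ℝ) = u * (2/u) := by field_simp
          _ ≤ u * ((N:ℝ)+1) := mul_le_mul_of_nonneg_left h2 hupos.le
      have hd := dual_upper_bound (T := T) hX0 hX hreach hf1 hX0ne hupos hN
      have hsum1 : ∑ t ∈ Finset.range (N+1), max (1 - u * t) 0 * c t
          ≤ ∑ t ∈ Finset.range (N+1), c t := by
        refine Finset.sum_le_sum fun t _ => ?_
        have h1 : max (1 - u * t) 0 ≤ 1 := by
          refine max_le ?_ one_pos.le
          nlinarith [mul_nonneg hupos.le (Nat.cast_nonneg (α := ℝ) t)]
        nlinarith [hc0 t]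
      have hsum2 : ∑ t ∈ Finset.range (N+1), c t ≤ primalValue n f X0 X T := by
        have := hprim N (fun _ => 1) (fun _ => one_pos.le) (fun _ => le_refl 1) ?_
        · simpa using this
        · have : ∑ t ∈ Finset.range (N+1), (t:ℝ) * 1 * c t = W (N+1) := by
            rw [hW]
            exact Finset.sum_congr rfl fun t _ => by ring
          rw [this]
          exact hcase (N+1)
      have huB : (T:ℝ) * u * (volume X).toReal = u * B := by rw [hB]; ring
      have huBe : u * B ≤ ε := by
        rw [hu]
        rw [div_mul_eq_mul_div]
        rw [div_le_iff₀ (by linarith)]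
        nlinarith
      rw [huB] at hd
      calc dualValue n f X0 X T ≤ (∑ t ∈ Finset.range (N+1), max (1 - u * t) 0 * c t) + u * B := hd
        _ ≤ primalValue n f X0 X T + ε := by linarith
    · -- budget binds : greedy
      push_neg at hcase
      have hex : ∃ m, B < W m := hcase
      set m₁ : ℕ := Nat.find hex with hm₁
      have hm₁spec : B < W m₁ := Nat.find_spec hex
      have hm₁min : ∀ m, m < m₁ → W m ≤ B := fun m hm => not_lt.1 (Nat.find_min hex hm)
      have hm₁pos : 1 ≤ m₁ := by
        by_contra hcon
        push_neg at hcon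
        interval_cases m₁
        · simp [hW] at hm₁spec
          linarith
      set s₁ : ℕ := m₁ - 1 with hs₁
      have hm₁s : m₁ = s₁ + 1 := by omega
      have hWs₁ : W s₁ ≤ B := hm₁min s₁ (by omega)
      have hWsucc : B < W s₁ + (s₁:ℝ) * c s₁ := by
        have : W (s₁+1) = W s₁ + (s₁:ℝ) * c s₁ := by
          simp only [hW, Finset.sum_range_succ]
        rw [← this, ← hm₁s]
        exact hm₁spec
      have hs₁pos : 1 ≤ s₁ := by
        by_contra hcon
        push_neg at hcon
        interval_cases s₁
        · simp at hWsucc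
          linarith
      have hs₁R : (0:ℝ) < (s₁:ℝ) := by exact_mod_cast hs₁pos
      have hcs₁ : 0 < c s₁ := by nlinarith
      set δ : ℝ := B - W s₁ with hδ
      have hδ0 : 0 ≤ δ := by linarith
      have hδlt : δ < (s₁:ℝ) * c s₁ := by linarith
      set u : ℝ := 1 / (s₁:ℝ) with hu
      have hupos : 0 < u := by positivity
      set N : ℕ := 2 * s₁ with hNdef
      have hN : 2 ≤ u * (N + 1) := by
        rw [hu, hNdef]
        rw [div_mul_eq_mul_div, le_div_iff₀ hs₁R]
        push_cast
        linarith
      have hd := dual_upper_bound (T := T) hX0 hX hreach hf1 hX0ne hupos hN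
      set g : ℕ → ℝ := fun t => if t < s₁ then 1 else if t = s₁ then δ/((s₁:ℝ) * c s₁) else 0
        with hg
      have hg0 : ∀ t, 0 ≤ g t := by
        intro t
        rw [hg]
        simp only []
        split_ifs
        · exact one_pos.le
        · positivity
        · exact le_refl 0
      have hg1 : ∀ t, g t ≤ 1 := by
        intro t
        rw [hg]
        simp only []
        split_ifs
        · exact le_refl 1
        · rw [div_le_one (by positivity)]
          linarith
        · exact one_pos.le
      have hs₁N : s₁ + 1 ≤ N + 1 := by omega
      -- the sums over range (N+1) reduce to range (s₁+1)
      have hsumg : ∀ (h : ℕ → ℝ),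
          ∑ t ∈ Finset.range (N+1), h t * g t * c t
            = ∑ t ∈ Finset.range (s₁+1), h t * g t * c t := by
        intro h
        refine (Finset.sum_subset (Finset.range_subset_range.2 hs₁N) ?_).symm
        intro t _ ht
        rw [Finset.mem_range] at ht
        have : g t = 0 := by
          rw [hg]
          simp only []
          rw [if_neg (by omega), if_neg (by omega)]
        rw [this]
        ring
      have hgs₁ : g s₁ = δ/((s₁:ℝ) * c s₁) := by
        simp only [hg]
        rw [if_neg (lt_irrefl s₁)]
        simp
      have hbud : ∑ t ∈ Finset.range (N+1), (t:ℝ) * g t * c t ≤ B := by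
        rw [hsumg (fun t => (t:ℝ)), Finset.sum_range_succ]
        have h1 : ∑ t ∈ Finset.range s₁, (t:ℝ) * g t * c t = W s₁ := by
          rw [hW]
          refine Finset.sum_congr rfl fun t ht => ?_
          rw [Finset.mem_range] at ht
          rw [hg]
          simp only []
          rw [if_pos ht]
          ring
        have h2 : (s₁:ℝ) * g s₁ * c s₁ = δ := by
          rw [hgs₁]
          field_simp
        rw [h1, h2]
        linarith
      have hP : ∑ t ∈ Finset.range (N+1), g t * c t ≤ primalValue n f X0 X T :=
        hprim N g hg0 hg1 hbud
      have hPval : ∑ t ∈ Finset.range (N+1), g t * c t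
          = (∑ t ∈ Finset.range s₁, c t) + δ/(s₁:ℝ) := by
        have := hsumg (fun _ => 1)
        simp only [one_mul] at this
        rw [this, Finset.sum_range_succ]
        have h1 : ∑ t ∈ Finset.range s₁, g t * c t = ∑ t ∈ Finset.range s₁, c t := by
          refine Finset.sum_congr rfl fun t ht => ?_
          rw [Finset.mem_range] at ht
          rw [hg]
          simp only []
          rw [if_pos ht, one_mul]
        have h2 : g s₁ * c s₁ = δ/(s₁:ℝ) := by
          rw [hgs₁]
          field_simp
        rw [h1, h2]
      have hDval : (∑ t ∈ Finset.range (N+1), max (1 - u * t) 0 * c t)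
            + (T:ℝ) * u * (volume X).toReal
          = (∑ t ∈ Finset.range s₁, c t) + δ/(s₁:ℝ) := by
        have hTuB : (T:ℝ) * u * (volume X).toReal = B / (s₁:ℝ) := by
          rw [hB, hu]
          field_simp
        have hred : ∑ t ∈ Finset.range (N+1), max (1 - u * t) 0 * c t
            = ∑ t ∈ Finset.range s₁, (1 - u * t) * c t := by
          refine (Finset.sum_subset (Finset.range_subset_range.2 (by omega : s₁ ≤ N + 1)) ?_).symm.trans ?_
          · intro t _ ht
            rw [Finset.mem_range] at ht
            have hts : (s₁:ℝ) ≤ (t:ℝ) := by exact_mod_cast (by omega : s₁ ≤ t)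
            have : max (1 - u * t) 0 = 0 := by
              rw [max_eq_right]
              rw [hu]
              rw [sub_nonpos, div_mul_eq_mul_div, le_div_iff₀ hs₁R]
              linarith
            rw [this, zero_mul]
          · refine Finset.sum_congr rfl fun t ht => ?_
            rw [Finset.mem_range] at ht
            have hts : (t:ℝ) < (s₁:ℝ) := by exact_mod_cast ht
            have : max (1 - u * t) 0 = 1 - u * t := by
              rw [max_eq_left]
              rw [hu, sub_nonneg, div_mul_eq_mul_div, div_le_one hs₁R]
              linarith
            rw [this]
        rw [hred, hTuB]
        have hexp : ∑ t ∈ Finset.range s₁, (1 - u * t) * c t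
            = (∑ t ∈ Finset.range s₁, c t) - u * W s₁ := by
          rw [hW, Finset.mul_sum, ← Finset.sum_sub_distrib]
          refine Finset.sum_congr rfl fun t _ => ?_
          ring
        rw [hexp, hu, hδ]
        field_simp
        ring
      rw [hDval] at hd
      rw [hPval] at hP
      linarith

end Assemble
end NoGap

/-- No duality gap: `p^T = d^T`, and there is a minimizing sequence of dual-feasible
triples whose objective values converge to `p^T`. -/
theorem no_duality_gap (n : ℕ) (hn : 1 ≤ n)
    (f : (Fin n → ℝ) → (Fin n → ℝ))
    (hfpoly : ∀ i, ∃ p : MvPolynomial (Fin n) ℝ, ∀ x, f x i = MvPolynomial.eval x p)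
    (X0 X : Set (Fin n → ℝ)) (hX0 : IsCompact X0) (hX : IsCompact X)
    (hreach : (⋃ t : ℕ, f^[t] '' X0) ⊆ X)
    (T : ℕ) (hT : 1 ≤ T) :
    primalValue n f X0 X T = dualValue n f X0 X T ∧
      ∃ (u : ℕ → ℝ) (v w : ℕ → (Fin n → ℝ) → ℝ),
        (∀ k, DualFeasible n f X0 X (u k) (v k) (w k)) ∧
        Tendsto (fun k => ∫ x in X, (w k x + (T : ℝ) * u k)) atTop
          (𝓝 (primalValue n f X0 X T)) := by
  classical
  have hf1 : ContDiff ℝ 1 f := NoGap.contDiff_of_poly f hfpoly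
  have hpd := NoGap.p_le_d (T := T) hX0 hX hf1.continuous
  have hdp := NoGap.d_le_p hX0 hX hreach hf1 hT
  have heq : primalValue n f X0 X T = dualValue n f X0 X T := le_antisymm hpd hdp
  refine ⟨heq, ?_⟩
  have hDne : Set.Nonempty {r : ℝ | ∃ u v w, DualFeasible n f X0 X u v w ∧
      r = ∫ x in X, (w x + (T : ℝ) * u)} := by
    refine ⟨∫ x in X, ((1:ℝ) + (T : ℝ) * 0), 0, fun _ => 0, fun _ => 1, ?_, rfl⟩
    exact ⟨le_refl 0, continuous_const, continuous_const, fun x _ => le_refl 0,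
      fun x _ => by norm_num, fun x _ => one_pos.le, fun x _ => by norm_num⟩
  have hbdd := NoGap.dualSet_bddBelow (n := n) (f := f) (X0 := X0) (T := T) hX
  have H : ∀ k : ℕ, ∃ u v w, DualFeasible n f X0 X u v w ∧
      (dualValue n f X0 X T ≤ ∫ x in X, (w x + (T : ℝ) * u)) ∧
      (∫ x in X, (w x + (T : ℝ) * u)) < dualValue n f X0 X T + 1/((k:ℝ)+1) := by
    intro k
    obtain ⟨r, hrD, hrlt⟩ := Real.lt_sInf_add_pos hDne
      (by positivity : (0:ℝ) < 1/((k:ℝ)+1))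
    obtain ⟨u, v, w, hD, rfl⟩ := hrD
    exact ⟨u, v, w, hD, csInf_le hbdd ⟨u, v, w, hD, rfl⟩, hrlt⟩
  choose uu vv ww hfe hge hlt using H
  refine ⟨uu, vv, ww, hfe, ?_⟩
  rw [heq]
  have h0 : Tendsto (fun k : ℕ => dualValue n f X0 X T + 1/((k:ℝ)+1)) atTop
      (𝓝 (dualValue n f X0 X T + 0)) :=
    tendsto_const_nhds.add tendsto_one_div_add_atTop_nhds_zero_nat
  rw [add_zero] at h0
  exact tendsto_of_tendsto_of_tendsto_of_le_of_le tendsto_const_nhds h0 hge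
    (fun k => (hlt k).le)
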